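/- Every strictly 2-dense number is φ-practical. -/

import Mathlib

/-- The divisors of `n` listed in increasing order. -/
def sortedDivisors (n : ℕ) : List ℕ := n.divisors.sort (· ≤ ·)

/-- A squarefree positive integer `n` with increasing divisor list
`1 = d₁ < d₂ < ⋯ < d_τ = n` is strictly 2-dense if `d_{i+1}/d_i < 2` for all
`i` with `1 < i < τ - 1`, while `d₂/d₁ = 2 = d_τ/d_{τ-1}`. -/
def IsStrictlyTwoDense (n : ℕ) : Prop :=
  Squarefree n ∧ 0 < n ∧
  (sortedDivisors n).getD 1 0 = 2 * (sortedDivisors n).getD 0 0 ∧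
  (sortedDivisors n).getD ((sortedDivisors n).length - 1) 0 =
    2 * (sortedDivisors n).getD ((sortedDivisors n).length - 2) 0 ∧
  ∀ i : ℕ, 2 ≤ i → i + 2 ≤ (sortedDivisors n).length →
    (sortedDivisors n).getD i 0 < 2 * (sortedDivisors n).getD (i - 1) 0

/-- A positive integer `n` is φ-practical if every integer `m` with `1 ≤ m ≤ n`
is a sum of totients of a subset of the divisors of `n`. -/
def IsPhiPractical (n : ℕ) : Prop :=
  0 < n ∧ ∀ m : ℕ, 1 ≤ m → m ≤ n →
    ∃ D : Finset ℕ, D ⊆ n.divisors ∧ m = ∑ d ∈ D, Nat.totient d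

namespace StrictlyTwoDenseAux

lemma mem_sortedDivisors {n d : ℕ} (hn : 0 < n) : d ∈ sortedDivisors n ↔ d ∣ n := by
  simp [sortedDivisors, Nat.mem_divisors, hn.ne']

/-- Key structural bridge: consecutive divisors `a < b` with `2 ≤ a` and `b < n`
satisfy `b < 2 * a`. -/
lemma bridge {n a b : ℕ} (h : IsStrictlyTwoDense n) (ha : a ∣ n) (hb : b ∣ n)
    (ha2 : 2 ≤ a) (hab : a < b) (hbn : b < n)
    (hcons : ∀ f, f ∣ n → ¬ (a < f ∧ f < b)) : b < 2 * a := by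
  have hn : 0 < n := h.2.1
  set L := sortedDivisors n with hL
  have hmemL : ∀ d : ℕ, d ∈ L ↔ d ∣ n := fun d => mem_sortedDivisors hn
  have hsort : L.SortedLT := Finset.sortedLT_sort _
  have hmono : StrictMono L.get := hsort.strictMono_get
  have hlt : ∀ (x y : ℕ) (hx : x < L.length) (hy : y < L.length), x < y →
      L.get ⟨x, hx⟩ < L.get ⟨y, hy⟩ := fun _ _ _ _ hxy => hmono (Fin.mk_lt_mk.mpr hxy)
  have hle : ∀ (x y : ℕ) (hx : x < L.length) (hy : y < L.length), x ≤ y →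
      L.get ⟨x, hx⟩ ≤ L.get ⟨y, hy⟩ := fun _ _ _ _ hxy =>
    hmono.monotone (Fin.mk_le_mk.mpr hxy)
  have hltrev : ∀ (x y : ℕ) (hx : x < L.length) (hy : y < L.length),
      L.get ⟨x, hx⟩ < L.get ⟨y, hy⟩ → x < y := by
    intro x y hx hy hxy
    by_contra hc
    push_neg at hc
    exact absurd (hle y x hy hx hc) (by omega)
  have hmem : ∀ (x : ℕ) (hx : x < L.length), L.get ⟨x, hx⟩ ∣ n := by
    intro x hx
    exact (hmemL _).mp (List.get_mem L ⟨x, hx⟩)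
  obtain ⟨⟨iv, hiv⟩, hi⟩ := List.mem_iff_get.mp ((hmemL _).mpr hb)
  obtain ⟨⟨tv, htv⟩, ht⟩ := List.mem_iff_get.mp ((hmemL _).mpr (dvd_refl n))
  obtain ⟨⟨kv, hkv⟩, hk⟩ := List.mem_iff_get.mp ((hmemL _).mpr ha)
  obtain ⟨⟨zv, hzv⟩, hz⟩ := List.mem_iff_get.mp ((hmemL _).mpr (one_dvd n))
  have hit : iv < tv := hltrev _ _ _ _ (by rw [hi, ht]; exact hbn)
  have hki : kv < iv := hltrev _ _ _ _ (by rw [hi, hk]; exact hab)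
  have hjv : iv - 1 < L.length := by omega
  -- the entry just below b equals a
  have haj : a ≤ L.get ⟨iv - 1, hjv⟩ := by
    rw [← hk]; exact hle _ _ _ _ (by omega)
  have hjb : L.get ⟨iv - 1, hjv⟩ < b := by
    rw [← hi]; exact hlt _ _ _ _ (by omega)
  have hja : L.get ⟨iv - 1, hjv⟩ = a := by
    by_contra hne
    exact hcons _ (hmem _ _) ⟨lt_of_le_of_ne haj (fun e => hne e.symm), hjb⟩
  -- iv ≥ 2 since the entry at iv - 1 is ≥ 2 > 1 and entry 0 is ≤ 1
  have hydo : iv - 1 ≠ 0 := by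
    intro h0
    have h2 : L.get ⟨iv - 1, hjv⟩ ≤ 1 := by
      calc L.get ⟨iv - 1, hjv⟩ ≤ L.get ⟨zv, hzv⟩ := hle (iv - 1) zv hjv hzv (by omega)
      _ = 1 := hz
    rw [hja] at h2
    omega
  have hi2 : 2 ≤ iv := by omega
  have hilen : iv + 2 ≤ L.length := by omega
  have hmid := h.2.2.2.2 iv hi2 hilen
  rw [← hL] at hmid
  rw [List.getD_eq_getElem L 0 (by omega : iv < L.length),
    List.getD_eq_getElem L 0 (by omega : iv - 1 < L.length)] at hmid
  have e1 : L[iv] = b := by rw [← hi]; simp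
  have e2 : L[iv - 1] = a := by rw [← hja]; simp
  rw [e1, e2] at hmid
  exact hmid

lemma two_dvd {n : ℕ} (h : IsStrictlyTwoDense n) : 2 ∣ n ∧ 1 < n := by
  have hn : 0 < n := h.2.1
  set L := sortedDivisors n with hL
  have hmemL : ∀ d : ℕ, d ∈ L ↔ d ∣ n := fun d => mem_sortedDivisors hn
  have hsort : L.SortedLT := Finset.sortedLT_sort _
  have hmono : StrictMono L.get := hsort.strictMono_get
  obtain ⟨z, hz⟩ := List.mem_iff_get.mp ((hmemL _).mpr (one_dvd n))
  have hlen0 : 0 < L.length := lt_of_le_of_lt (Nat.zero_le _) z.isLt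
  have hget0 : L.get ⟨0, hlen0⟩ = 1 := by
    have hle : L.get ⟨0, hlen0⟩ ≤ L.get z := hmono.monotone (Fin.mk_le_mk.mpr (Nat.zero_le _))
    rw [hz] at hle
    have hpos : 1 ≤ L.get ⟨0, hlen0⟩ := by
      have hdvd : L.get ⟨0, hlen0⟩ ∣ n := (hmemL _).mp (List.get_mem L ⟨0, hlen0⟩)
      exact Nat.pos_of_dvd_of_pos hdvd hn
    omega
  have h1 := h.2.2.1
  rw [← hL] at h1
  rw [List.getD_eq_getElem L 0 hlen0] at h1
  simp only [List.get_eq_getElem] at hget0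
  rw [hget0, mul_one] at h1
  -- h1 : L.getD 1 0 = 2
  by_cases hlen1 : 1 < L.length
  · rw [List.getD_eq_getElem L 0 hlen1] at h1
    have : L[(1 : ℕ)] ∈ L := List.getElem_mem _
    rw [h1] at this
    have h2n : 2 ∣ n := (hmemL _).mp this
    exact ⟨h2n, lt_of_lt_of_le one_lt_two (Nat.le_of_dvd hn h2n)⟩
  · exfalso
    rw [List.getD_eq_default L 0 (by omega)] at h1
    omega

/-- Every prime `q` dividing a strictly 2-dense `n` satisfies
`q ≤ 2 + ∏ (primes of n below q)`. -/
lemma prime_bound {n : ℕ} (h : IsStrictlyTwoDense n) {q : ℕ} (hq : q.Prime) (hqn : q ∣ n) :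
    q ≤ 2 + ∏ p ∈ n.primeFactors.filter (· < q), p := by
  have hn : 0 < n := h.2.1
  have hsf : Squarefree n := h.1
  obtain ⟨h2n, hn1⟩ := two_dvd h
  set S := n.primeFactors.filter (· < q) with hS
  set T := n.primeFactors.filter (fun p => ¬ p < q) with hT
  set P := ∏ p ∈ S, p with hP
  set H := ∏ p ∈ T, p with hH
  have hPH : P * H = n := by
    rw [hP, hH, Finset.prod_filter_mul_prod_filter_not]
    exact Nat.prod_primeFactors_of_squarefree hsf
  have hHdvd : H ∣ n := ⟨P, by rw [← hPH]; ring⟩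
  have hPdvd : P ∣ n := ⟨H, hPH.symm⟩
  have hPpos : 0 < P := Finset.prod_pos (fun p hp => (Nat.prime_of_mem_primeFactors
    (Finset.mem_filter.mp hp).1).pos)
  have hHpos : 0 < H := Finset.prod_pos (fun p hp => (Nat.prime_of_mem_primeFactors
    (Finset.mem_filter.mp hp).1).pos)
  -- trivial for q ≤ 3
  by_cases hq5 : q < 5
  · have h2q := hq.two_le
    have hq3 : q ≤ 3 := by
      rcases Nat.lt_or_ge q 4 with h4 | h4
      · omega
      · exfalso
        have he : q = 4 := by omega
        rw [he] at hq
        exact (by decide : ¬ Nat.Prime 4) hq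
    omega
  push_neg at hq5
  by_contra hcon
  push_neg at hcon
  -- so q ≥ 3 + P, in particular P < q
  have hPq : P < q := by omega
  -- facts about prime factors of H
  have hHfac : ∀ r : ℕ, r.Prime → r ∣ H → q ≤ r := by
    intro r hr hrH
    by_contra hrq
    push_neg at hrq
    have hrS : r ∈ S := by
      rw [hS, Finset.mem_filter]
      refine ⟨Nat.mem_primeFactors.mpr ⟨hr, hrH.trans hHdvd, hn.ne'⟩, hrq⟩
    have hrP : r ∣ P := Finset.dvd_prod_of_mem _ hrS
    have : r * r ∣ n := by
      rw [← hPH]; exact mul_dvd_mul hrP hrH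
    exact hr.not_isUnit (hsf r this)
  have hqT : q ∈ T := by
    rw [hT, Finset.mem_filter]
    exact ⟨Nat.mem_primeFactors.mpr ⟨hq, hqn, hn.ne'⟩, by omega⟩
  have hqH : q ∣ H := Finset.dvd_prod_of_mem _ hqT
  have hqleH : q ≤ H := Nat.le_of_dvd hHpos hqH
  have h2S : (2 : ℕ) ∈ S := by
    rw [hS, Finset.mem_filter]
    exact ⟨Nat.mem_primeFactors.mpr ⟨Nat.prime_two, h2n, hn.ne'⟩, by omega⟩
  have h2P : 2 ∣ P := Finset.dvd_prod_of_mem _ h2S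
  -- proper divisors of H are ≤ H / q
  have hproper : ∀ hh : ℕ, hh ∣ H → hh ≠ H → q * hh ≤ H := by
    intro hh hhH hne
    obtain ⟨c, hc⟩ := hhH
    have hcpos : 0 < c := by
      rcases Nat.eq_zero_or_pos c with h0 | h0
      · rw [h0, mul_zero] at hc; omega
      · exact h0
    have hc1 : c ≠ 1 := by
      intro h1; rw [h1, mul_one] at hc; exact hne hc.symm
    obtain ⟨r, hr, hrc⟩ := Nat.exists_prime_and_dvd hc1
    have hrH : r ∣ H := hc ▸ Dvd.dvd.mul_left hrc hh
    have hqr := hHfac r hr hrH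
    have hrlec : r ≤ c := Nat.le_of_dvd hcpos hrc
    calc q * hh ≤ r * hh := Nat.mul_le_mul_right _ hqr
    _ ≤ c * hh := Nat.mul_le_mul_right _ hrlec
    _ = H := by rw [hc]; ring
  by_cases hP2 : P = 2
  -- case P = 2 : use the consecutive pair (2, q)
  · have hqlt : q < n := by
      have : n = 2 * H := by rw [← hPH, hP2]
      omega
    have hcons : ∀ f, f ∣ n → ¬ (2 < f ∧ f < q) := by
      rintro f hf ⟨hf2, hfq⟩
      rw [← hPH] at hf
      obtain ⟨d, hh, hd, hhH, hfdh⟩ := exists_dvd_and_dvd_of_dvd_mul hf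
      by_cases hh1 : hh = 1
      · rw [hh1, mul_one] at hfdh
        have : f ≤ P := hfdh ▸ Nat.le_of_dvd hPpos hd
        omega
      · obtain ⟨r, hr, hrh⟩ := Nat.exists_prime_and_dvd hh1
        have hqr := hHfac r hr (hrh.trans hhH)
        have hhpos : 0 < hh := by
          rcases Nat.eq_zero_or_pos hh with h0 | h0
          · rw [h0, mul_zero] at hfdh; omega
          · exact h0
        have : q ≤ f := by
          calc q ≤ r := hqr
          _ ≤ hh := Nat.le_of_dvd hhpos hrh
          _ ≤ d * hh := Nat.le_mul_of_pos_left _ (by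
              rcases Nat.eq_zero_or_pos d with h0 | h0
              · rw [h0, zero_mul] at hfdh; omega
              · exact h0)
          _ = f := hfdh.symm
        omega
    have := bridge h h2n hqn le_rfl (by omega) hqlt hcons
    omega
  -- case P ≥ 4 : use the consecutive pair (H, 2H)
  · have hP4 : 4 ≤ P := by
      obtain ⟨c, hc⟩ := h2P
      rcases Nat.lt_or_ge c 2 with h2 | h2
      · interval_cases c <;> omega
      · omega
    have h2Hdvd : 2 * H ∣ n := by
      rw [← hPH]; exact mul_dvd_mul h2P dvd_rfl
    have h2Hlt : 2 * H < n := by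
      rw [← hPH]
      have := hHpos
      calc 2 * H < 4 * H := by omega
      _ ≤ P * H := Nat.mul_le_mul_right _ hP4
    have hcons : ∀ f, f ∣ n → ¬ (H < f ∧ f < 2 * H) := by
      rintro f hf ⟨hfH, hf2H⟩
      rw [← hPH] at hf
      obtain ⟨d, hh, hd, hhH, hfdh⟩ := exists_dvd_and_dvd_of_dvd_mul hf
      by_cases hhful : hh = H
      · subst hhful
        have hd2 : 2 ≤ d := by
          by_contra hd2
          push_neg at hd2
          interval_cases d
          · rw [zero_mul] at hfdh; omega
          · rw [one_mul] at hfdh; omega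
        have : 2 * H ≤ f := by rw [hfdh]; exact Nat.mul_le_mul_right _ hd2
        omega
      · have hdP : d ≤ P := Nat.le_of_dvd hPpos hd
        have hkey := hproper hh hhH hhful
        have hhpos : 0 < hh := by
          rcases Nat.eq_zero_or_pos hh with h0 | h0
          · rw [h0, mul_zero] at hfdh; omega
          · exact h0
        have : f < H := by
          calc f = d * hh := hfdh
          _ ≤ P * hh := Nat.mul_le_mul_right _ hdP
          _ < q * hh := Nat.mul_lt_mul_of_lt_of_le hPq le_rfl hhpos
          _ ≤ H := hkey
        omega
    have := bridge h hHdvd h2Hdvd (by omega) (by omega) h2Hlt hcons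
    omega

lemma phiPractical_one : IsPhiPractical 1 := by
  refine ⟨one_pos, fun m hm1 hm2 => ?_⟩
  have : m = 1 := le_antisymm hm2 hm1
  subst this
  refine ⟨{1}, ?_, ?_⟩
  · intro x hx
    simp at hx
    simp [hx, Nat.mem_divisors]
  · simp

lemma phiPractical_mul_prime {m p : ℕ} (hm : IsPhiPractical m) (hp : p.Prime)
    (hpm : ¬ p ∣ m) (hle : p ≤ m + 2) : IsPhiPractical (m * p) := by
  have hmpos : 0 < m := hm.1
  have hppos : 0 < p := hp.pos
  have hp2 : 2 ≤ p := hp.two_le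
  refine ⟨Nat.mul_pos hmpos hppos, fun x hx1 hxmp => ?_⟩
  have hrep : ∀ y, y ≤ m → ∃ D : Finset ℕ, D ⊆ m.divisors ∧ y = ∑ d ∈ D, Nat.totient d := by
    intro y hy
    rcases Nat.eq_zero_or_pos y with h0 | h0
    · exact ⟨∅, Finset.empty_subset _, by simp [h0]⟩
    · exact hm.2 y h0 hy
  set c := min m (x / (p - 1)) with hc
  set a := x - c * (p - 1) with ha
  have hcm : c ≤ m := min_le_left _ _
  have hcx : c * (p - 1) ≤ x := by
    calc c * (p - 1) ≤ (x / (p - 1)) * (p - 1) :=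
      Nat.mul_le_mul_right _ (min_le_right _ _)
    _ ≤ x := Nat.div_mul_le_self _ _
  have hmp : m * p = m * (p - 1) + m := by
    have : p - 1 + 1 = p := by omega
    calc m * p = m * ((p - 1) + 1) := by rw [this]
    _ = m * (p - 1) + m := by ring
  have ham : a ≤ m := by
    rcases le_or_gt m (x / (p - 1)) with hcase | hcase
    · have hceq : c = m := min_eq_left hcase
      rw [ha, hceq]
      omega
    · have hceq : c = x / (p - 1) := min_eq_right hcase.le
      have hdm := Nat.div_add_mod x (p - 1)
      have hmod : x % (p - 1) < p - 1 := Nat.mod_lt _ (by omega)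
      rw [ha, hceq]
      have : (x / (p - 1)) * (p - 1) = (p - 1) * (x / (p - 1)) := by ring
      omega
  obtain ⟨D₁, hD₁sub, hD₁sum⟩ := hrep a ham
  obtain ⟨D₂, hD₂sub, hD₂sum⟩ := hrep c hcm
  refine ⟨D₁ ∪ D₂.image (· * p), ?_, ?_⟩
  · intro d hd
    rw [Finset.mem_union] at hd
    rcases hd with hd | hd
    · have := hD₁sub hd
      rw [Nat.mem_divisors] at this ⊢
      exact ⟨this.1.mul_right p, by positivity⟩
    · rw [Finset.mem_image] at hd
      obtain ⟨e, he, rfl⟩ := hd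
      have := hD₂sub he
      rw [Nat.mem_divisors] at this ⊢
      exact ⟨mul_dvd_mul this.1 dvd_rfl, by positivity⟩
  · have hdisj : Disjoint D₁ (D₂.image (· * p)) := by
      rw [Finset.disjoint_left]
      intro e he₁ he₂
      rw [Finset.mem_image] at he₂
      obtain ⟨f, hf, rfl⟩ := he₂
      have hfm : f ∣ m := (Nat.mem_divisors.mp (hD₂sub hf)).1
      have hem : f * p ∣ m := (Nat.mem_divisors.mp (hD₁sub he₁)).1
      exact hpm (dvd_trans (Dvd.intro_left f rfl) hem)
    rw [Finset.sum_union hdisj]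
    have hinj : ∀ y ∈ D₂, ∀ z ∈ D₂, y * p = z * p → y = z := by
      intro y _ z _ hyz
      exact Nat.eq_of_mul_eq_mul_right hppos hyz
    rw [Finset.sum_image hinj]
    have htot : ∀ d ∈ D₂, Nat.totient (d * p) = Nat.totient d * (p - 1) := by
      intro d hd
      have hdm : d ∣ m := (Nat.mem_divisors.mp (hD₂sub hd)).1
      have hcop : Nat.Coprime d p := by
        have : ¬ p ∣ d := fun hpd => hpm (hpd.trans hdm)
        exact (hp.coprime_iff_not_dvd.mpr this).symm
      rw [Nat.totient_mul hcop, Nat.totient_prime hp]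
    rw [Finset.sum_congr rfl htot, ← Finset.sum_mul, ← hD₂sum, ← hD₁sum]
    omega

lemma practical_of_good : ∀ n : ℕ, 0 < n → Squarefree n →
    (∀ q : ℕ, q.Prime → q ∣ n → q ≤ 2 + ∏ p ∈ n.primeFactors.filter (· < q), p) →
    IsPhiPractical n := by
  intro n
  induction n using Nat.strong_induction_on with
  | _ n ih =>
    intro hn hsf hcond
    rcases Nat.lt_or_ge n 2 with h2 | h2
    · interval_cases n
      · exact phiPractical_one
    · have hne : n.primeFactors.Nonempty := Nat.nonempty_primeFactors.mpr h2
      set q := n.primeFactors.max' hne with hq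
      have hqmem : q ∈ n.primeFactors := Finset.max'_mem _ _
      have hqprime : q.Prime := Nat.prime_of_mem_primeFactors hqmem
      have hqdvd : q ∣ n := Nat.dvd_of_mem_primeFactors hqmem
      obtain ⟨m, hm⟩ := hqdvd
      have hmpos : 0 < m := by
        rcases Nat.eq_zero_or_pos m with h0 | h0
        · rw [h0, mul_zero] at hm; omega
        · exact h0
      have hmlt : m < n := by
        have := hqprime.two_le
        calc m < 2 * m := by omega
        _ ≤ q * m := Nat.mul_le_mul_right _ this
        _ = n := hm.symm
      have hmdvd : m ∣ n := ⟨q, by rw [hm]; ring⟩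
      have hmsf : Squarefree m := hsf.squarefree_of_dvd hmdvd
      have hqm : ¬ q ∣ m := by
        intro hqm
        have : q * q ∣ n := by
          rw [hm]; exact mul_dvd_mul dvd_rfl hqm
        exact hqprime.not_isUnit (hsf q this)
      have hpm_of_dvd : ∀ p : ℕ, p.Prime → p ∣ n → p ≠ q → p ∣ m := by
        intro p hp hpn hpq
        have hcop : Nat.Coprime p q := (Nat.coprime_primes hp hqprime).mpr hpq
        rw [hm] at hpn
        exact hcop.dvd_of_dvd_mul_left hpn
      have hfac : n.primeFactors.filter (· < q) = m.primeFactors := by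
        ext p
        simp only [Finset.mem_filter, Nat.mem_primeFactors]
        constructor
        · rintro ⟨⟨hp, hpn, -⟩, hplt⟩
          exact ⟨hp, hpm_of_dvd p hp hpn (by omega), hmpos.ne'⟩
        · rintro ⟨hp, hpm, -⟩
          have hpn : p ∣ n := hpm.trans hmdvd
          have hple : p ≤ q := Finset.le_max' _ _ (Nat.mem_primeFactors.mpr ⟨hp, hpn, hn.ne'⟩)
          have hpq : p ≠ q := by
            intro e; subst e; exact hqm hpm
          exact ⟨⟨hp, hpn, hn.ne'⟩, by omega⟩
      have hqle : q ≤ 2 + m := by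
        have := hcond q hqprime ⟨m, hm⟩
        rwa [hfac, Nat.prod_primeFactors_of_squarefree hmsf] at this
      have hmcond : ∀ q' : ℕ, q'.Prime → q' ∣ m →
          q' ≤ 2 + ∏ p ∈ m.primeFactors.filter (· < q'), p := by
        intro q' hq' hq'm
        have hq'n : q' ∣ n := hq'm.trans hmdvd
        have hq'q : q' < q := by
          have hle : q' ≤ q := Finset.le_max' _ _
            (Nat.mem_primeFactors.mpr ⟨hq', hq'n, hn.ne'⟩)
          have hne : q' ≠ q := by
            intro e; subst e; exact hqm hq'm
          omega
        have hflt : n.primeFactors.filter (· < q') = m.primeFactors.filter (· < q') := by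
          rw [← hfac, Finset.filter_filter]
          apply Finset.filter_congr
          intro p _
          constructor
          · intro hp
            have hp' : p < q' := by simpa using hp
            simp only [hp', and_true]
            simpa using (by omega : p < q)
          · intro hp
            have hp' : (p < q) ∧ (p < q') := by simpa using hp
            simpa using hp'.2
        have := hcond q' hq' hq'n
        rwa [hflt] at this
      have hmprac : IsPhiPractical m := ih m hmlt hmpos hmsf hmcond
      have := phiPractical_mul_prime hmprac hqprime hqm (by omega)
      rw [hm, mul_comm]
      exact this

end StrictlyTwoDenseAux

theorem strictlyTwoDense_is_phiPractical (n : ℕ) (h : IsStrictlyTwoDense n) :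
    IsPhiPractical n :=
  StrictlyTwoDenseAux.practical_of_good n h.2.1 h.1
    (fun q hq hqn => StrictlyTwoDenseAux.prime_bound h hq hqn)
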